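/- Let X₁, …, Xₙ be independent nonnegative random variables where X_i = (Y_i/k)^{1/β} with Y_i ~ Gamma(γ_i/β, 1), k > 0, β ≥ 1, γ_i > 0. With γ₀ = γ₁ + ⋯ + γₙ, for all x > 0: Γ(γ₀/β, k x^β)/Γ(γ₀/β) ≤ P(X₁ + ⋯ + Xₙ > x) ≤ Γ(γ₀/β, k x^β/n^{β-1})/Γ(γ₀/β). -/

import Mathlib

open Real MeasureTheory ProbabilityTheory

/-- The upper incomplete gamma function Γ(α, x) = ∫_x^∞ t^(α-1) e^{-t} dt. -/
noncomputable def upperGamma (a x : ℝ) : ℝ :=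
  ∫ t in Set.Ioi x, t ^ (a - 1) * Real.exp (-t)

/-- The law on ℝ with density β k^(γ/β) x^(γ-1) e^{-k x^β} / Γ(γ/β) on (0, ∞):
the law of (Y/k)^(1/β) where Y ~ Gamma(γ/β, 1). -/
noncomputable def weibullLikeLaw (k β γ : ℝ) : Measure ℝ :=
  volume.withDensity fun x =>
    ENNReal.ofReal
      (if 0 < x then β * k ^ (γ / β) * x ^ (γ - 1) * Real.exp (-(k * x ^ β)) / Real.Gamma (γ / β)
       else 0)

open Set
open scoped ENNReal

section Aux

lemma betaIntegrand_intervalIntegrable {a b z : ℝ} (ha : 0 < a) (hb : 0 < b) (hz : 0 < z) :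
    IntervalIntegrable (fun x => x ^ (a - 1) * (z - x) ^ (b - 1)) volume 0 z := by
  have h1 : IntervalIntegrable (fun x => x ^ (a - 1) * (z - x) ^ (b - 1)) volume 0 (z / 2) := by
    apply IntervalIntegrable.mul_continuousOn
    · exact intervalIntegral.intervalIntegrable_rpow' (by linarith)
    · apply ContinuousOn.rpow_const (by fun_prop)
      intro x hx
      rw [uIcc_of_le (by linarith)] at hx
      exact Or.inl (by nlinarith [hx.1, hx.2])
  have h2 : IntervalIntegrable (fun x => x ^ (a - 1) * (z - x) ^ (b - 1)) volume (z / 2) z := by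
    apply IntervalIntegrable.continuousOn_mul
    · have := (intervalIntegral.intervalIntegrable_rpow' (r := b - 1)
        (by linarith) (a := z / 2) (b := 0)).comp_sub_left z
      have hz2 : z - z / 2 = z / 2 := by ring
      rw [hz2, sub_zero] at this
      exact this
    · apply ContinuousOn.rpow_const continuousOn_id
      intro x hx
      rw [uIcc_of_le (by linarith)] at hx
      exact Or.inl (by simpa using (lt_of_lt_of_le (by linarith) hx.1).ne')
  exact h1.trans h2

lemma integral_betaIntegrand {a b z : ℝ} (ha : 0 < a) (hb : 0 < b) (hz : 0 < z) :
    ∫ x in (0:ℝ)..z, x ^ (a - 1) * (z - x) ^ (b - 1)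
      = Real.Gamma a * Real.Gamma b / Real.Gamma (a + b) * z ^ (a + b - 1) := by
  have hC := Complex.betaIntegral_scaled (a : ℂ) (b : ℂ) hz
  have hGG := Complex.Gamma_mul_Gamma_eq_betaIntegral
    (s := (a:ℂ)) (t := (b:ℂ)) (by simpa using ha) (by simpa using hb)
  have hab : Real.Gamma (a + b) ≠ 0 := (Real.Gamma_pos_of_pos (by linarith)).ne'
  have h1 : Complex.Gamma ((a:ℂ) + (b:ℂ)) ≠ 0 := by
    rw [show ((a:ℂ) + (b:ℂ)) = ((a + b : ℝ) : ℂ) by push_cast; ring, Complex.Gamma_ofReal]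
    exact_mod_cast hab
  have key : (∫ x in (0:ℝ)..z, (x:ℂ) ^ ((a:ℂ) - 1) * ((z:ℝ) - x : ℂ) ^ ((b:ℂ) - 1))
      = ((∫ x in (0:ℝ)..z, x ^ (a - 1) * (z - x) ^ (b - 1) : ℝ) : ℂ) := by
    rw [← intervalIntegral.integral_ofReal]
    apply intervalIntegral.integral_congr
    intro x hx
    rw [uIcc_of_le hz.le] at hx
    show _ = ((_ * _ : ℝ) : ℂ)
    rw [Complex.ofReal_mul, Complex.ofReal_cpow hx.1,
      Complex.ofReal_cpow (by linarith [hx.2] : (0:ℝ) ≤ z - x)]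
    push_cast
    ring
  rw [key] at hC
  have hβ : Complex.betaIntegral a b
      = ((Real.Gamma a * Real.Gamma b / Real.Gamma (a+b) : ℝ) : ℂ) := by
    have hb2 : Complex.betaIntegral a b
        = Complex.Gamma a * Complex.Gamma b / Complex.Gamma ((a:ℂ) + (b:ℂ)) := by
      rw [eq_div_iff h1]; linear_combination hGG.symm
    rw [hb2, show ((a:ℂ) + (b:ℂ)) = ((a + b : ℝ) : ℂ) by push_cast; ring,
      Complex.Gamma_ofReal, Complex.Gamma_ofReal, Complex.Gamma_ofReal]
    push_cast
    ring
  rw [hβ, show ((a:ℂ) + ↑b - 1) = ((a + b - 1 : ℝ) : ℂ) by push_cast; ring,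
    ← Complex.ofReal_cpow hz.le, ← Complex.ofReal_mul, Complex.ofReal_inj] at hC
  rw [hC]; ring

lemma map_add_withDensity (f g : ℝ → ℝ≥0∞) (hf : Measurable f) (hg : Measurable g) :
    Measure.map (fun p : ℝ × ℝ => p.1 + p.2)
      ((volume.withDensity f).prod (volume.withDensity g))
    = volume.withDensity (fun z => ∫⁻ x, f x * g (z - x)) := by
  ext s hs
  rw [Measure.map_apply measurable_add hs, withDensity_apply _ hs,
    Measure.prod_apply (measurable_add hs)]
  have step1 : ∀ x : ℝ, (volume.withDensity g) (Prod.mk x ⁻¹' ((fun p : ℝ × ℝ => p.1 + p.2) ⁻¹' s))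
      = ∫⁻ z, s.indicator (fun _ => 1) z * g (z - x) := by
    intro x
    have hpre : (Prod.mk x ⁻¹' ((fun p : ℝ × ℝ => p.1 + p.2) ⁻¹' s)) = (fun y => x + y) ⁻¹' s := rfl
    rw [hpre, withDensity_apply _ (measurable_const_add x hs),
      ← lintegral_indicator (measurable_const_add x hs) _]
    have heq : ∀ y : ℝ, ((fun y => x + y) ⁻¹' s).indicator g y
        = (fun z => s.indicator (fun _ => 1) z * g (z - x)) (x + y) := by
      intro y
      simp only [indicator, mem_preimage, add_sub_cancel_left]
      by_cases h : x + y ∈ s <;> simp [h]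
    simp_rw [heq]
    exact lintegral_add_left_eq_self (fun z => s.indicator (fun _ => 1) z * g (z - x)) x
  simp_rw [step1]
  have hind : Measurable (s.indicator (fun _ : ℝ => (1:ℝ≥0∞))) :=
    measurable_const.indicator hs
  have hinner : ∀ x : ℝ, Measurable fun z : ℝ => s.indicator (fun _ => (1:ℝ≥0∞)) z * g (z - x) :=
    fun x => hind.mul (hg.comp (measurable_sub_const x))
  rw [lintegral_withDensity_eq_lintegral_mul _ hf
    (Measurable.lintegral_prod_right (f := fun x z => s.indicator (fun _ => (1:ℝ≥0∞)) z * g (z - x))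
      ((hind.comp measurable_snd).mul (hg.comp (measurable_snd.sub measurable_fst))))]
  have hmeas2 : Measurable (Function.uncurry fun (x z : ℝ) =>
      f x * (s.indicator (fun _ => (1:ℝ≥0∞)) z * g (z - x))) :=
    (hf.comp measurable_fst).mul
      ((hind.comp measurable_snd).mul (hg.comp (measurable_snd.sub measurable_fst)))
  calc ∫⁻ x, f x * ∫⁻ z, s.indicator (fun _ => 1) z * g (z - x)
      = ∫⁻ x, ∫⁻ z, f x * (s.indicator (fun _ => 1) z * g (z - x)) := by
        congr 1; ext x; rw [lintegral_const_mul _ (hinner x)]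
    _ = ∫⁻ z, ∫⁻ x, f x * (s.indicator (fun _ => 1) z * g (z - x)) :=
        lintegral_lintegral_swap hmeas2.aemeasurable
    _ = ∫⁻ z, s.indicator (fun _ => 1) z * ∫⁻ x, f x * g (z - x) := by
        congr 1; ext z
        rw [← lintegral_const_mul _ (by fun_prop : Measurable fun x : ℝ => f x * g (z - x))]
        congr 1; ext x; ring
    _ = ∫⁻ z in s, ∫⁻ x, f x * g (z - x) := by
        rw [← lintegral_indicator hs _]
        congr 1; ext z
        by_cases h : z ∈ s <;> simp [h]

lemma gammaPDF_conv {a b : ℝ} (ha : 0 < a) (hb : 0 < b) {z : ℝ} (hz : z ≠ 0) :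
    ∫⁻ x, gammaPDF a 1 x * gammaPDF b 1 (z - x) = gammaPDF (a + b) 1 z := by
  rcases lt_or_gt_of_ne hz with hneg | hpos
  · rw [gammaPDF_of_neg hneg]
    rw [← lintegral_zero]
    apply lintegral_congr
    intro x
    rcases lt_or_ge x 0 with hx | hx
    · rw [gammaPDF_of_neg hx, zero_mul]
    · rw [gammaPDF_of_neg (by linarith : z - x < 0), mul_zero]
  · -- z > 0
    have hΓa := Real.Gamma_pos_of_pos ha
    have hΓb := Real.Gamma_pos_of_pos hb
    have hΓab := Real.Gamma_pos_of_pos (by linarith : 0 < a + b)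
    -- the real convolution integrand
    set h : ℝ → ℝ := fun x =>
      (1 ^ a / Real.Gamma a * x ^ (a - 1) * Real.exp (-(1 * x))) *
      (1 ^ b / Real.Gamma b * (z - x) ^ (b - 1) * Real.exp (-(1 * (z - x)))) with hh
    have hsplit : ∫⁻ x, gammaPDF a 1 x * gammaPDF b 1 (z - x)
        = ∫⁻ x in Icc 0 z, ENNReal.ofReal (h x) := by
      rw [← lintegral_indicator measurableSet_Icc]
      apply lintegral_congr
      intro x
      rcases lt_or_ge x 0 with hx | hx
      · rw [gammaPDF_of_neg hx, zero_mul, indicator_of_notMem (by simp [hx.not_ge])]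
      rcases lt_or_ge z x with hxz | hxz
      · rw [gammaPDF_of_neg (by linarith : z - x < 0), mul_zero,
          indicator_of_notMem (by simp [hxz.not_ge])]
      · rw [indicator_of_mem (by exact ⟨hx, hxz⟩), gammaPDF_of_nonneg hx,
          gammaPDF_of_nonneg (by linarith : (0:ℝ) ≤ z - x), hh,
          ← ENNReal.ofReal_mul (by positivity)]
    have hInt : IntegrableOn h (Icc 0 z) := by
      have : IntegrableOn (fun x => x ^ (a - 1) * (z - x) ^ (b - 1)) (Icc 0 z) := by
        rw [← intervalIntegrable_iff_integrableOn_Icc_of_le hpos.le]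
        exact betaIntegrand_intervalIntegrable ha hb hpos
      have heq : ∀ x ∈ Icc (0:ℝ) z, h x
          = (Real.exp (-z) / (Real.Gamma a * Real.Gamma b)) * (x ^ (a - 1) * (z - x) ^ (b - 1)) := by
        intro x hx
        rw [hh]
        simp only [one_rpow, one_mul]
        have e : rexp (-x) * rexp (x - z) = rexp (-z) := by
          rw [← Real.exp_add]; congr 1; ring
        rw [show -(z - x) = x - z by ring]
        field_simp
        linear_combination x ^ (a - 1) * (z - x) ^ (b - 1) * e
      exact IntegrableOn.congr_fun
        (this.const_mul (Real.exp (-z) / (Real.Gamma a * Real.Gamma b)))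
        (fun x hx => (heq x hx).symm) measurableSet_Icc
    rw [hsplit, ← ofReal_integral_eq_lintegral_ofReal hInt ?_]
    swap
    · filter_upwards [ae_restrict_mem measurableSet_Icc] with x hx
      rw [hh]
      simp only [one_rpow, one_mul]
      have h2 : (0:ℝ) ≤ z - x := by linarith [hx.2]
      exact mul_nonneg
        (mul_nonneg (mul_nonneg (by positivity) (rpow_nonneg hx.1 _)) (Real.exp_nonneg _))
        (mul_nonneg (mul_nonneg (by positivity) (rpow_nonneg h2 _)) (Real.exp_nonneg _))
    have hval : ∫ x in Icc (0:ℝ) z, h x = 1 ^ (a+b) / Real.Gamma (a+b) * z ^ (a + b - 1) * Real.exp (-(1*z)) := by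
      rw [integral_Icc_eq_integral_Ioc, ← intervalIntegral.integral_of_le hpos.le]
      have heq : ∀ x ∈ uIcc (0:ℝ) z, h x
          = (Real.exp (-z) / (Real.Gamma a * Real.Gamma b)) * (x ^ (a - 1) * (z - x) ^ (b - 1)) := by
        intro x hx
        rw [hh]
        simp only [one_rpow, one_mul]
        have e : rexp (-x) * rexp (x - z) = rexp (-z) := by
          rw [← Real.exp_add]; congr 1; ring
        rw [show -(z - x) = x - z by ring]
        field_simp
        linear_combination x ^ (a - 1) * (z - x) ^ (b - 1) * e
      rw [intervalIntegral.integral_congr heq, intervalIntegral.integral_const_mul,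
        integral_betaIntegrand ha hb hpos]
      simp only [one_rpow, one_mul]
      field_simp
    rw [hval, gammaPDF_of_nonneg hpos.le]

lemma measurable_gammaPDF (a r : ℝ) : Measurable (gammaPDF a r) :=
  (measurable_gammaPDFReal a r).ennreal_ofReal

lemma gammaMeasure_conv {a b : ℝ} (ha : 0 < a) (hb : 0 < b) :
    Measure.map (fun p : ℝ × ℝ => p.1 + p.2)
      ((gammaMeasure a 1).prod (gammaMeasure b 1)) = gammaMeasure (a + b) 1 := by
  rw [gammaMeasure, gammaMeasure, gammaMeasure,
    map_add_withDensity _ _ (measurable_gammaPDF a 1) (measurable_gammaPDF b 1)]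
  apply withDensity_congr_ae
  have h0 : ∀ᵐ z : ℝ, z ≠ 0 := by
    rw [ae_iff]
    simpa using measure_singleton (0:ℝ)
  -- note: simpa fine
  filter_upwards [h0] with z hz
  exact gammaPDF_conv ha hb hz

lemma sum_indep_gamma {Ω : Type*} [MeasureSpace Ω] [IsProbabilityMeasure (ℙ : Measure Ω)]
    {n : ℕ} {Y : Fin n → Ω → ℝ} (hmeas : ∀ i, Measurable (Y i))
    (hindep : iIndepFun Y ℙ)
    {a : Fin n → ℝ} (ha : ∀ i, 0 < a i)
    (hlaw : ∀ i, Measure.map (Y i) ℙ = gammaMeasure (a i) 1) :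
    ∀ s : Finset (Fin n), s.Nonempty →
      Measure.map (fun ω => ∑ i ∈ s, Y i ω) ℙ = gammaMeasure (∑ i ∈ s, a i) 1 := by
  intro s
  induction s using Finset.cons_induction with
  | empty => rintro ⟨i, hi⟩; simp at hi
  | cons j s hj ih =>
    intro _
    rcases s.eq_empty_or_nonempty with rfl | hs
    · simpa using hlaw j
    · have hS : Measurable fun ω => ∑ i ∈ s, Y i ω := by
        apply Finset.measurable_sum
        exact fun i _ => hmeas i
      have hSum : Measure.map (fun ω => ∑ i ∈ s, Y i ω) ℙ = gammaMeasure (∑ i ∈ s, a i) 1 :=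
        ih hs
      have hIndep : IndepFun (Y j) (fun ω => ∑ i ∈ s, Y i ω) ℙ := by
        have := (hindep.indepFun_finset_sum_of_notMem hmeas hj).symm
        convert this using 1
        ext ω
        simp [Finset.sum_apply]
      have hmap := (indepFun_iff_map_prod_eq_prod_map_map (hmeas j).aemeasurable
        hS.aemeasurable).mp hIndep
      have key : (fun ω => ∑ i ∈ Finset.cons j s hj, Y i ω)
          = (fun p : ℝ × ℝ => p.1 + p.2) ∘ (fun ω => (Y j ω, ∑ i ∈ s, Y i ω)) := by
        ext ω; rw [Finset.sum_cons]; rfl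
      rw [key, ← Measure.map_map measurable_add ((hmeas j).prodMk hS), hmap, hlaw j, hSum,
        gammaMeasure_conv (ha j) (Finset.sum_pos (fun i _ => ha i) hs), Finset.sum_cons]

lemma continuous_weibullphi {k β : ℝ} (hβ : 1 ≤ β) :
    Continuous fun x : ℝ => k * |x| ^ β :=
  continuous_const.mul ((Real.continuous_rpow_const (by linarith)).comp continuous_abs)

lemma integrableOn_gammaIntegrand {a t : ℝ} (ha : 0 < a) (ht : 0 < t) :
    IntegrableOn (fun y => y ^ (a - 1) * Real.exp (-y)) (Ioc 0 t) := by
  rw [← intervalIntegrable_iff_integrableOn_Ioc_of_le ht.le]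
  exact (intervalIntegral.intervalIntegrable_rpow' (by linarith)).mul_continuousOn
    (Real.continuous_exp.comp continuous_neg).continuousOn

lemma weibull_map {k β γ : ℝ} (hk : 0 < k) (hβ : 1 ≤ β) (hγ : 0 < γ)
    [IsProbabilityMeasure (weibullLikeLaw k β γ)] :
    Measure.map (fun x => k * |x| ^ β) (weibullLikeLaw k β γ) = gammaMeasure (γ / β) 1 := by
  have hβ0 : 0 < β := by linarith
  set a : ℝ := γ / β with ha_def
  have ha : 0 < a := div_pos hγ hβ0
  have hΓa : 0 < Real.Gamma a := Real.Gamma_pos_of_pos ha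
  have hφm : Measurable fun x : ℝ => k * |x| ^ β := (continuous_weibullphi hβ).measurable
  haveI : IsProbabilityMeasure (gammaMeasure a 1) := isProbabilityMeasure_gammaMeasure ha one_pos
  haveI : IsProbabilityMeasure
      (Measure.map (fun x : ℝ => k * |x| ^ β) (weibullLikeLaw k β γ)) :=
    Measure.isProbabilityMeasure_map hφm.aemeasurable
  -- the density as a real function
  set d : ℝ → ℝ := fun x =>
    if 0 < x then β * k ^ a * x ^ (γ - 1) * Real.exp (-(k * x ^ β)) / Real.Gamma a else 0
    with hd_def
  have hL : weibullLikeLaw k β γ = volume.withDensity fun x => ENNReal.ofReal (d x) := rfl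
  apply Measure.ext_of_Iic
  intro t
  rw [Measure.map_apply hφm measurableSet_Iic, hL,
    withDensity_apply _ (hφm measurableSet_Iic)]
  -- RHS helper
  have hRHS0 : ∀ t' : ℝ, t' ≤ 0 → gammaMeasure a 1 (Iic t') = 0 := by
    intro t' ht'
    have h1 : gammaMeasure a 1 (Iic 0) = 0 := by
      rw [gammaMeasure, withDensity_apply _ measurableSet_Iic,
        lintegral_Iic_eq_lintegral_Iio_add_Icc _ le_rfl,
        lintegral_gammaPDF_of_nonpos le_rfl, zero_add, Icc_self,
        setLIntegral_measure_zero _ _ (measure_singleton (0:ℝ))]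
    exact measure_mono_null (Iic_subset_Iic.mpr ht') h1
  rcases le_or_gt t 0 with ht | ht
  · -- t ≤ 0 : both sides zero
    rw [hRHS0 t ht]
    rw [← lintegral_zero]
    apply setLIntegral_congr_fun_ae (hφm measurableSet_Iic)
    filter_upwards with x hx
    rcases lt_or_ge 0 x with hx0 | hx0
    · exfalso
      have : 0 < k * |x| ^ β := by
        apply mul_pos hk
        rw [abs_of_pos hx0]
        exact Real.rpow_pos_of_pos hx0 β
      have : k * |x| ^ β ≤ t := hx
      linarith
    · simp only [hd_def]
      rw [if_neg (not_lt.mpr hx0), ENNReal.ofReal_zero]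
  · -- t > 0
    set c : ℝ := (t / k) ^ β⁻¹ with hc_def
    have htk : 0 < t / k := div_pos ht hk
    have hc : 0 < c := Real.rpow_pos_of_pos htk _
    have hmemIff : ∀ x : ℝ, 0 < x → (k * |x| ^ β ≤ t ↔ x ≤ c) := by
      intro x hx
      rw [abs_of_pos hx, hc_def, Real.le_rpow_inv_iff_of_pos hx.le htk.le hβ0,
        ← le_div_iff₀' hk]
    -- LHS = lintegral over Ioc 0 c
    have hLHS : ∫⁻ x in (fun x : ℝ => k * |x| ^ β) ⁻¹' Iic t, ENNReal.ofReal (d x)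
        = ∫⁻ x in Ioc 0 c, ENNReal.ofReal (d x) := by
      rw [← lintegral_indicator (hφm measurableSet_Iic), ← lintegral_indicator measurableSet_Ioc]
      apply lintegral_congr
      intro x
      rcases lt_or_ge 0 x with hx0 | hx0
      · by_cases hxc : x ≤ c
        · rw [indicator_of_mem (show x ∈ (fun x : ℝ => k * |x| ^ β) ⁻¹' Iic t from
              (hmemIff x hx0).mpr hxc),
            indicator_of_mem (show x ∈ Ioc 0 c from ⟨hx0, hxc⟩)]
        · rw [indicator_of_notMem (by
              intro hmem
              exact hxc ((hmemIff x hx0).mp hmem)),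
            indicator_of_notMem (by simp [hxc])]
      · have hdx : ENNReal.ofReal (d x) = 0 := by
          simp only [hd_def]
          rw [if_neg (not_lt.mpr hx0), ENNReal.ofReal_zero]
        by_cases h1 : x ∈ (fun x : ℝ => k * |x| ^ β) ⁻¹' Iic t <;>
          by_cases h2 : x ∈ Ioc 0 c <;>
          simp [h1, h2, hdx]
    rw [hLHS]
    -- positive branch of density
    set dp : ℝ → ℝ := fun x => β * k ^ a * x ^ (γ - 1) * Real.exp (-(k * x ^ β)) / Real.Gamma a
      with hdp_def
    have hdIoc : ∫⁻ x in Ioc 0 c, ENNReal.ofReal (d x)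
        = ∫⁻ x in Ioc 0 c, ENNReal.ofReal (dp x) := by
      apply setLIntegral_congr_fun_ae measurableSet_Ioc
      filter_upwards with x hx
      simp only [hd_def, hdp_def, if_pos hx.1]
    rw [hdIoc]
    -- integrability of dp on Ioc 0 c
    have hIntdp : IntegrableOn dp (Ioc 0 c) := by
      have hbase : IntegrableOn (fun x : ℝ => x ^ (γ - 1) * Real.exp (-(k * x ^ β))) (Ioc 0 c) := by
        rw [← intervalIntegrable_iff_integrableOn_Ioc_of_le hc.le]
        exact (intervalIntegral.intervalIntegrable_rpow' (by linarith)).mul_continuousOn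
          (Real.continuous_exp.comp
            ((continuous_const.mul (Real.continuous_rpow_const hβ0.le)).neg)).continuousOn
      have hcm := (hbase.const_mul (β * k ^ a / Real.Gamma a))
      exact IntegrableOn.congr_fun hcm
        (fun x hx => by simp only [hdp_def]; ring) measurableSet_Ioc
    have hdpnn : ∀ x ∈ Ioc (0:ℝ) c, 0 ≤ dp x := by
      intro x hx
      simp only [hdp_def]
      have : (0:ℝ) ≤ x ^ (γ - 1) := Real.rpow_nonneg hx.1.le _
      positivity
    rw [← ofReal_integral_eq_lintegral_ofReal hIntdp
      (by filter_upwards [ae_restrict_mem measurableSet_Ioc] with x hx using hdpnn x hx)]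
    -- RHS computation
    have hRHS : gammaMeasure a 1 (Iic t)
        = ENNReal.ofReal (∫ y in Ioc 0 t, (1 / Real.Gamma a) * (y ^ (a - 1) * Real.exp (-y))) := by
      rw [gammaMeasure, withDensity_apply _ measurableSet_Iic,
        lintegral_Iic_eq_lintegral_Iio_add_Icc _ ht.le,
        lintegral_gammaPDF_of_nonpos le_rfl, zero_add]
      have h1 : ∫⁻ x in Icc 0 t, gammaPDF a 1 x = ∫⁻ x in Ioc 0 t, gammaPDF a 1 x := by
        exact setLIntegral_congr (Ioc_ae_eq_Icc (α := ℝ) (a := 0) (b := t)).symm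
      rw [h1]
      have h2 : ∫⁻ x in Ioc 0 t, gammaPDF a 1 x
          = ∫⁻ x in Ioc 0 t, ENNReal.ofReal ((1 / Real.Gamma a) * (x ^ (a-1) * Real.exp (-x))) := by
        apply setLIntegral_congr_fun_ae measurableSet_Ioc
        filter_upwards with x hx
        rw [gammaPDF_of_nonneg hx.1.le]
        congr 1
        rw [Real.one_rpow]
        ring_nf
      rw [h2, ← ofReal_integral_eq_lintegral_ofReal
        ((integrableOn_gammaIntegrand ha ht).const_mul _) ?_]
      filter_upwards [ae_restrict_mem measurableSet_Ioc] with x hx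
      have : (0:ℝ) ≤ x ^ (a - 1) := Real.rpow_nonneg hx.1.le _
      positivity
    rw [hRHS]
    congr 1
    -- the real change of variables
    set F : ℝ → ℝ := (Ioc 0 (t/k)).indicator
      (fun u => (k ^ a / Real.Gamma a) * (u ^ (a - 1) * Real.exp (-(k * u)))) with hF_def
    set H : ℝ → ℝ := (Ioc 0 t).indicator
      (fun y => (1 / Real.Gamma a) * (y ^ (a - 1) * Real.exp (-y))) with hH_def
    have step1 : ∫ x in Ioc 0 c, dp x = ∫ x in Ioi 0, (β * x ^ (β - 1)) • F (x ^ β) := by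
      rw [show ∫ x in Ioc 0 c, dp x = ∫ x in Ioi (0:ℝ), (Ioc 0 c).indicator dp x by
        rw [setIntegral_indicator measurableSet_Ioc,
          show Ioi (0:ℝ) ∩ Ioc 0 c = Ioc 0 c from inter_eq_right.mpr Ioc_subset_Ioi_self]]
      apply setIntegral_congr_fun measurableSet_Ioi
      intro x hx
      have hx0 : (0:ℝ) < x := hx
      have hxpow : (0:ℝ) < x ^ β := Real.rpow_pos_of_pos hx0 β
      have hiff : x ^ β ≤ t / k ↔ x ≤ c := by
        rw [hc_def, Real.le_rpow_inv_iff_of_pos hx0.le htk.le hβ0]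
      show (Ioc 0 c).indicator dp x = (β * x ^ (β - 1)) • F (x ^ β)
      by_cases hxc : x ≤ c
      · rw [indicator_of_mem (show x ∈ Ioc 0 c from ⟨hx0, hxc⟩), hF_def,
          indicator_of_mem (show x ^ β ∈ Ioc 0 (t/k) from ⟨hxpow, hiff.mpr hxc⟩)]
        simp only [hdp_def, smul_eq_mul]
        rw [← Real.rpow_mul hx0.le β (a - 1)]
        have hexp : β * (a - 1) = γ - β := by
          rw [ha_def, mul_sub, mul_one, mul_div_assoc', mul_comm β γ, mul_div_assoc,
            div_self hβ0.ne', mul_one]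
        rw [hexp]
        rw [show x ^ (γ - 1) = x ^ (β - 1) * x ^ (γ - β) by
          rw [← Real.rpow_add hx0]; congr 1; ring]
        field_simp
      · rw [indicator_of_notMem (by simp [hxc]), hF_def,
          indicator_of_notMem (by
            intro hmem
            exact hxc (hiff.mp hmem.2)), smul_zero]
    have step2 : ∫ x in Ioi (0:ℝ), (β * x ^ (β - 1)) • F (x ^ β) = ∫ u in Ioi (0:ℝ), F u :=
      integral_comp_rpow_Ioi_of_pos hβ0
    have step4 : ∀ u : ℝ, 0 < u → F u = k • H (k * u) := by
      intro u hu
      have hkuiff : k * u ≤ t ↔ u ≤ t / k := by rw [le_div_iff₀' hk]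
      by_cases hut : u ≤ t / k
      · rw [hF_def, indicator_of_mem (show u ∈ Ioc 0 (t/k) from ⟨hu, hut⟩), hH_def,
          indicator_of_mem (show k * u ∈ Ioc 0 t from ⟨mul_pos hk hu, hkuiff.mpr hut⟩)]
        simp only [smul_eq_mul]
        rw [Real.mul_rpow hk.le hu.le]
        rw [show k ^ a = k * k ^ (a - 1) by
          rw [← Real.rpow_one_add' hk.le (by
            intro h
            have : a = 0 := by linarith
            exact ha.ne' this)]
          congr 1; ring]
        field_simp
      · rw [hF_def, indicator_of_notMem (by simp [hut]), hH_def,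
          indicator_of_notMem (by
            intro hmem
            exact hut (hkuiff.mp hmem.2)), smul_zero]
    have step4' : ∫ u in Ioi (0:ℝ), F u = ∫ u in Ioi (0:ℝ), k • H (k * u) := by
      apply setIntegral_congr_fun measurableSet_Ioi
      intro u hu
      show F u = (fun u => k • H (k * u)) u
      exact step4 u hu
    have step5 : ∫ u in Ioi (0:ℝ), k • H (k * u) = ∫ y in Ioi (0:ℝ), H y := by
      rw [integral_smul, integral_comp_mul_left_Ioi H 0 hk, mul_zero, smul_smul,
        mul_inv_cancel₀ hk.ne', one_smul]
    have step6 : ∫ y in Ioi (0:ℝ), H y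
        = ∫ y in Ioc 0 t, (1 / Real.Gamma a) * (y ^ (a - 1) * Real.exp (-y)) := by
      rw [hH_def, setIntegral_indicator measurableSet_Ioc,
        show Ioi (0:ℝ) ∩ Ioc 0 t = Ioc 0 t from inter_eq_right.mpr Ioc_subset_Ioi_self]
    rw [step1, step2, step4', step5, step6]

lemma add_rpow_le' {x y p : ℝ} (hx : 0 ≤ x) (hy : 0 ≤ y) (hp : 1 ≤ p) :
    x ^ p + y ^ p ≤ (x + y) ^ p := by
  have h := NNReal.add_rpow_le_rpow_add x.toNNReal y.toNNReal hp
  have h2 := NNReal.coe_le_coe.mpr h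
  push_cast at h2
  rwa [Real.coe_toNNReal x hx, Real.coe_toNNReal y hy] at h2

lemma sum_rpow_le_rpow_sum {ι : Type*} (s : Finset ι) (f : ι → ℝ) (hf : ∀ i ∈ s, 0 ≤ f i)
    {p : ℝ} (hp : 1 ≤ p) : ∑ i ∈ s, f i ^ p ≤ (∑ i ∈ s, f i) ^ p := by
  induction s using Finset.cons_induction with
  | empty => simp [Real.zero_rpow (by positivity : p ≠ 0)]
  | cons j s hj ih =>
    rw [Finset.sum_cons, Finset.sum_cons]
    have h1 : ∑ i ∈ s, f i ^ p ≤ (∑ i ∈ s, f i) ^ p :=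
      ih (fun i hi => hf i (Finset.mem_cons_of_mem hi))
    calc f j ^ p + ∑ i ∈ s, f i ^ p ≤ f j ^ p + (∑ i ∈ s, f i) ^ p := by linarith
      _ ≤ (f j + ∑ i ∈ s, f i) ^ p :=
          add_rpow_le' (hf j (Finset.mem_cons_self j s))
            (Finset.sum_nonneg fun i hi => hf i (Finset.mem_cons_of_mem hi)) hp

lemma point_ineq_low {n : ℕ} (k β x : ℝ) (hk : 0 < k) (hβ : 1 ≤ β) (hx : 0 < x)
    (v : Fin n → ℝ) (hv : ∀ i, 0 < v i)
    (h : k * x ^ β < ∑ i, k * v i ^ β) : x < ∑ i, v i := by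
  have hβ0 : 0 < β := by linarith
  have hsum : ∑ i, k * v i ^ β = k * ∑ i, v i ^ β := by rw [Finset.mul_sum]
  rw [hsum] at h
  have h2 : x ^ β < ∑ i, v i ^ β := lt_of_mul_lt_mul_left h hk.le
  have h3 : ∑ i, v i ^ β ≤ (∑ i, v i) ^ β :=
    sum_rpow_le_rpow_sum _ _ (fun i _ => (hv i).le) hβ
  by_contra hcon
  push_neg at hcon
  have : (∑ i, v i) ^ β ≤ x ^ β :=
    Real.rpow_le_rpow (Finset.sum_nonneg fun i _ => (hv i).le) hcon hβ0.le
  linarith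

lemma point_ineq_up {n : ℕ} (hn : 1 ≤ n) (k β x : ℝ) (hk : 0 < k) (hβ : 1 ≤ β) (hx : 0 < x)
    (v : Fin n → ℝ) (hv : ∀ i, 0 < v i)
    (h : x < ∑ i, v i) : k * x ^ β / (n : ℝ) ^ (β - 1) < ∑ i, k * v i ^ β := by
  have hβ0 : 0 < β := by linarith
  have hn0 : (0:ℝ) < n := by exact_mod_cast hn
  have hS : (0:ℝ) < ∑ i, v i := by
    calc (0:ℝ) < x := hx
      _ < _ := h
  have hmean : ((∑ i : Fin n, (1 / (n:ℝ)) * v i)) ^ β ≤ ∑ i : Fin n, (1 / (n:ℝ)) * v i ^ β := by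
    apply Real.rpow_arith_mean_le_arith_mean_rpow Finset.univ _ _
      (fun i _ => by positivity) ?_ (fun i _ => (hv i).le) hβ
    rw [Finset.sum_const, Finset.card_univ, Fintype.card_fin, nsmul_eq_mul]
    field_simp
  have hsum1 : ∑ i : Fin n, (1 / (n:ℝ)) * v i = (1 / (n:ℝ)) * ∑ i, v i := by
    rw [Finset.mul_sum]
  have hsum2 : ∑ i : Fin n, (1 / (n:ℝ)) * v i ^ β = (1 / (n:ℝ)) * ∑ i, v i ^ β := by
    rw [Finset.mul_sum]
  rw [hsum1, hsum2] at hmean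
  have hxβ : x ^ β < (∑ i, v i) ^ β :=
    Real.rpow_lt_rpow hx.le h hβ0
  have hfact : (∑ i, v i) ^ β = (n:ℝ) ^ β * ((1 / (n:ℝ)) * ∑ i, v i) ^ β := by
    rw [← Real.mul_rpow hn0.le (by positivity)]
    congr 1
    field_simp
  have hkey : x ^ β < (n:ℝ) ^ (β - 1) * ∑ i, v i ^ β := by
    have h1 : (n:ℝ) ^ β * ((1 / (n:ℝ)) * ∑ i, v i) ^ β
        ≤ (n:ℝ) ^ β * ((1 / (n:ℝ)) * ∑ i, v i ^ β) := by
      apply mul_le_mul_of_nonneg_left hmean (Real.rpow_nonneg hn0.le β)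
    have h2 : (n:ℝ) ^ β * ((1 / (n:ℝ)) * ∑ i, v i ^ β) = (n:ℝ) ^ (β - 1) * ∑ i, v i ^ β := by
      rw [Real.rpow_sub hn0, Real.rpow_one]
      field_simp
    calc x ^ β < (∑ i, v i) ^ β := hxβ
      _ = (n:ℝ) ^ β * ((1 / (n:ℝ)) * ∑ i, v i) ^ β := hfact
      _ ≤ (n:ℝ) ^ β * ((1 / (n:ℝ)) * ∑ i, v i ^ β) := h1
      _ = (n:ℝ) ^ (β - 1) * ∑ i, v i ^ β := h2
  have hnβ : (0:ℝ) < (n:ℝ) ^ (β - 1) := Real.rpow_pos_of_pos hn0 _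
  rw [div_lt_iff₀ hnβ, show (∑ i, k * v i ^ β) = k * ∑ i, v i ^ β from by
    rw [Finset.mul_sum]]
  calc k * x ^ β < k * ((n:ℝ) ^ (β - 1) * ∑ i, v i ^ β) := (mul_lt_mul_iff_right₀ hk).mpr hkey
    _ = k * (∑ i, v i ^ β) * (n:ℝ) ^ (β - 1) := by ring

lemma gamma_tail {a c : ℝ} (ha : 0 < a) (hc : 0 < c) :
    gammaMeasure a 1 (Ioi c) = ENNReal.ofReal (upperGamma a c / Real.Gamma a) := by
  have hΓ : 0 < Real.Gamma a := Real.Gamma_pos_of_pos ha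
  have hInt : IntegrableOn (fun t : ℝ => t ^ (a - 1) * Real.exp (-t)) (Ioi c) := by
    have := (Real.GammaIntegral_convergent ha).mono_set (Ioi_subset_Ioi hc.le)
    exact IntegrableOn.congr_fun this (fun x hx => mul_comm _ _) measurableSet_Ioi
  rw [gammaMeasure, withDensity_apply _ measurableSet_Ioi]
  have h1 : ∫⁻ t in Ioi c, gammaPDF a 1 t
      = ∫⁻ t in Ioi c, ENNReal.ofReal ((1 / Real.Gamma a) * (t ^ (a - 1) * Real.exp (-t))) := by
    apply setLIntegral_congr_fun_ae measurableSet_Ioi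
    filter_upwards with t ht
    rw [gammaPDF_of_nonneg (le_of_lt (lt_trans hc ht))]
    congr 1
    rw [Real.one_rpow]
    ring_nf
  rw [h1, ← ofReal_integral_eq_lintegral_ofReal (hInt.const_mul _) ?_]
  · rw [MeasureTheory.integral_const_mul]
    congr 1
    rw [upperGamma]
    field_simp
  · filter_upwards [ae_restrict_mem measurableSet_Ioi] with t ht
    have h0t : (0:ℝ) < t := lt_trans hc ht
    have : (0:ℝ) ≤ t ^ (a - 1) := Real.rpow_nonneg h0t.le _
    positivity

lemma upperGamma_nonneg {a c : ℝ} (hc : 0 < c) : 0 ≤ upperGamma a c := by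
  apply setIntegral_nonneg measurableSet_Ioi
  intro t ht
  have h0t : (0:ℝ) < t := lt_trans hc ht
  have : (0:ℝ) ≤ t ^ (a - 1) := Real.rpow_nonneg h0t.le _
  positivity

lemma weibull_Iic0 {k β γ : ℝ} : weibullLikeLaw k β γ (Iic 0) = 0 := by
  rw [weibullLikeLaw, withDensity_apply _ measurableSet_Iic, ← lintegral_zero]
  apply setLIntegral_congr_fun_ae measurableSet_Iic
  filter_upwards with x hx
  rw [if_neg (not_lt.mpr hx), ENNReal.ofReal_zero]

lemma measure_le_of_null_compl {Ω : Type*} [MeasurableSpace Ω] {μ : Measure Ω}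
    {A E F : Set Ω} (hA : μ Aᶜ = 0) (h : E ∩ A ⊆ F) : μ E ≤ μ F := by
  calc μ E ≤ μ (F ∪ Aᶜ) := measure_mono (fun ω hω => by
        by_cases hω2 : ω ∈ A
        · exact Or.inl (h ⟨hω, hω2⟩)
        · exact Or.inr hω2)
    _ ≤ μ F + μ Aᶜ := measure_union_le _ _
    _ = μ F := by rw [hA, add_zero]

end Aux


theorem stmt_7 {Ω : Type*} [MeasureSpace Ω] [IsProbabilityMeasure (ℙ : Measure Ω)]
    (n : ℕ) (hn : 1 ≤ n) (k β : ℝ) (γ : Fin n → ℝ)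
    (hk : 0 < k) (hβ : 1 ≤ β) (hγ : ∀ i, 0 < γ i)
    (X : Fin n → Ω → ℝ) (hmeas : ∀ i, Measurable (X i))
    (hindep : iIndepFun X ℙ)
    (hdist : ∀ i, Measure.map (X i) ℙ = weibullLikeLaw k β (γ i))
    (γ₀ : ℝ) (hγ₀ : γ₀ = ∑ i, γ i)
    (x : ℝ) (hx : 0 < x) :
    upperGamma (γ₀ / β) (k * x ^ β) / Real.Gamma (γ₀ / β)
        ≤ (ℙ {ω | x < ∑ i, X i ω}).toReal ∧
      (ℙ {ω | x < ∑ i, X i ω}).toReal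
        ≤ upperGamma (γ₀ / β) (k * x ^ β / (n : ℝ) ^ (β - 1))
            / Real.Gamma (γ₀ / β) := by
  have hβ0 : 0 < β := lt_of_lt_of_le one_pos hβ
  haveI : Nonempty (Fin n) := ⟨⟨0, hn⟩⟩
  have hγ₀pos : 0 < γ₀ := by
    rw [hγ₀]
    exact Finset.sum_pos (fun i _ => hγ i) Finset.univ_nonempty
  have ha0 : 0 < γ₀ / β := div_pos hγ₀pos hβ0
  have hΓ : 0 < Real.Gamma (γ₀ / β) := Real.Gamma_pos_of_pos ha0
  set φ : ℝ → ℝ := fun x => k * |x| ^ β with hφ_def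
  have hφm : Measurable φ := (continuous_weibullphi hβ).measurable
  set Y : Fin n → Ω → ℝ := fun i => φ ∘ X i with hY_def
  have hmeasY : ∀ i, Measurable (Y i) := fun i => hφm.comp (hmeas i)
  have hlawY : ∀ i, Measure.map (Y i) ℙ = gammaMeasure (γ i / β) 1 := by
    intro i
    haveI : IsProbabilityMeasure (weibullLikeLaw k β (γ i)) := by
      rw [← hdist i]
      exact Measure.isProbabilityMeasure_map (hmeas i).aemeasurable
    calc Measure.map (Y i) ℙ = Measure.map φ (Measure.map (X i) ℙ) :=
          (Measure.map_map hφm (hmeas i)).symm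
      _ = _ := by rw [hdist i]; exact weibull_map hk hβ (hγ i)
  have hindepY : iIndepFun Y ℙ :=
    hindep.comp (fun _ => φ) (fun _ => hφm)
  set T : Ω → ℝ := fun ω => ∑ i, Y i ω with hT_def
  have hmeasT : Measurable T := Finset.measurable_sum _ (fun i _ => hmeasY i)
  have hTlaw : Measure.map T ℙ = gammaMeasure (γ₀ / β) 1 := by
    have hs := sum_indep_gamma hmeasY hindepY (fun i => div_pos (hγ i) hβ0) hlawY
      Finset.univ Finset.univ_nonempty
    rw [show (γ₀ / β) = ∑ i, γ i / β from by rw [hγ₀, Finset.sum_div]]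
    exact hs
  set A : Set Ω := {ω | ∀ i, 0 < X i ω} with hA_def
  have hAc : ℙ Aᶜ = 0 := by
    have hAeq : Aᶜ = ⋃ i, {ω | X i ω ≤ 0} := by
      ext ω
      simp [hA_def, not_forall, not_lt]
    rw [hAeq]
    apply measure_iUnion_null
    intro i
    have hset : {ω | X i ω ≤ 0} = X i ⁻¹' (Iic 0) := rfl
    rw [hset, ← Measure.map_apply (hmeas i) measurableSet_Iic, hdist i]
    exact weibull_Iic0
  have hconv : ∀ ω ∈ A, T ω = ∑ i, k * (X i ω) ^ β := by
    intro ω hω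
    apply Finset.sum_congr rfl
    intro i _
    simp only [hY_def, hφ_def, Function.comp_apply]
    rw [abs_of_pos (hω i)]
  have htail : ∀ c : ℝ, 0 < c →
      ℙ {ω | c < T ω} = ENNReal.ofReal (upperGamma (γ₀ / β) c / Real.Gamma (γ₀ / β)) := by
    intro c hc
    have hset : {ω | c < T ω} = T ⁻¹' (Ioi c) := rfl
    rw [hset, ← Measure.map_apply hmeasT measurableSet_Ioi, hTlaw, gamma_tail ha0 hc]
  have hc1 : (0:ℝ) < k * x ^ β := mul_pos hk (Real.rpow_pos_of_pos hx β)
  have hn0 : (0:ℝ) < (n:ℝ) := by exact_mod_cast hn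
  have hc2 : (0:ℝ) < k * x ^ β / (n : ℝ) ^ (β - 1) :=
    div_pos hc1 (Real.rpow_pos_of_pos hn0 _)
  constructor
  · -- lower bound
    have hsub : {ω | k * x ^ β < T ω} ∩ A ⊆ {ω | x < ∑ i, X i ω} := by
      rintro ω ⟨hω1, hω2⟩
      have hω1' : k * x ^ β < ∑ i, k * (X i ω) ^ β := by
        rw [← hconv ω hω2]
        exact hω1
      exact point_ineq_low k β x hk hβ hx (fun i => X i ω) (fun i => hω2 i) hω1'
    have hle : ℙ {ω | k * x ^ β < T ω} ≤ ℙ {ω | x < ∑ i, X i ω} :=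
      measure_le_of_null_compl hAc hsub
    calc upperGamma (γ₀ / β) (k * x ^ β) / Real.Gamma (γ₀ / β)
        = (ℙ {ω | k * x ^ β < T ω}).toReal := by
          rw [htail _ hc1, ENNReal.toReal_ofReal
            (div_nonneg (upperGamma_nonneg hc1) hΓ.le)]
      _ ≤ (ℙ {ω | x < ∑ i, X i ω}).toReal :=
          ENNReal.toReal_mono (measure_ne_top _ _) hle
  · -- upper bound
    have hsub : {ω | x < ∑ i, X i ω} ∩ A ⊆ {ω | k * x ^ β / (n : ℝ) ^ (β - 1) < T ω} := by
      rintro ω ⟨hω1, hω2⟩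
      have := point_ineq_up hn k β x hk hβ hx (fun i => X i ω) (fun i => hω2 i) hω1
      show k * x ^ β / (n : ℝ) ^ (β - 1) < T ω
      rw [hconv ω hω2]
      exact this
    have hle : ℙ {ω | x < ∑ i, X i ω} ≤ ℙ {ω | k * x ^ β / (n : ℝ) ^ (β - 1) < T ω} :=
      measure_le_of_null_compl hAc hsub
    calc (ℙ {ω | x < ∑ i, X i ω}).toReal
        ≤ (ℙ {ω | k * x ^ β / (n : ℝ) ^ (β - 1) < T ω}).toReal :=
          ENNReal.toReal_mono (measure_ne_top _ _) hle
      _ = upperGamma (γ₀ / β) (k * x ^ β / (n : ℝ) ^ (β - 1)) / Real.Gamma (γ₀ / β) := by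
          rw [htail _ hc2, ENNReal.toReal_ofReal
            (div_nonneg (upperGamma_nonneg hc2) hΓ.le)]
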